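/- Let X ⊆ ℤ² be a full-dimensional lattice-convex set with finitely many observers, all lying in convex position on the boundary of the polygon obtained by moving out the edges of conv(X) by lattice distance one. Then rc(X) ≤ H(X) + 1, where H(X) is the maximum cardinality of a hiding set for X; combined with the general hiding set bound, H(X) ≤ rc(X) ≤ H(X) + 1. -/

import Mathlib

def toR {d : ℕ} (z : Fin d → ℤ) : Fin d → ℝ := fun i => (z i : ℝ)

/-- `S` is a hiding set for the lattice-convex set `X`. -/
def HidingSet {d : ℕ} (X S : Set (Fin d → ℤ)) : Prop :=
  (∀ z ∈ S, z ∉ X ∧ toR z ∈ (affineSpan ℝ (toR '' X) : Set (Fin d → ℝ))) ∧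
  ∀ x ∈ S, ∀ y ∈ S, x ≠ y →
    (convexHull ℝ {toR x, toR y} ∩ convexHull ℝ (toR '' X)).Nonempty

/-- `Ax ≤ b` is a relaxation of `X`: its integer solutions are exactly `X`. -/
def Relax {d m : ℕ} (X : Set (Fin d → ℤ)) (A : Fin m → Fin d → ℝ)
    (b : Fin m → ℝ) : Prop :=
  ∀ z : Fin d → ℤ, (∀ i, ∑ j, A i j * (z j : ℝ) ≤ b i) ↔ z ∈ X

namespace RCAux


/-- dot product on the plane -/
def dotp (a x : Fin 2 → ℝ) : ℝ := a 0 * x 0 + a 1 * x 1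

lemma dotp_sum (a x : Fin 2 → ℝ) : (∑ j, a j * x j) = dotp a x := by
  simp [Fin.sum_univ_two, dotp]

/-- unit vector at angle θ -/
noncomputable def uvec (θ : ℝ) : Fin 2 → ℝ := ![Real.cos θ, Real.sin θ]

lemma toR_injective {d : ℕ} : Function.Injective (toR (d := d)) := by
  intro z w h
  funext i
  have : ((z i : ℝ)) = (w i : ℝ) := congrFun h i
  exact_mod_cast this

lemma dotp_smul_add (a : Fin 2 → ℝ) (s t : ℝ) (x y : Fin 2 → ℝ) :
    dotp a (s • x + t • y) = s * dotp a x + t * dotp a y := by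
  simp [dotp]; ring

lemma uvec_periodic (θ : ℝ) (k : ℤ) : uvec (θ - 2 * Real.pi * k) = uvec θ := by
  unfold uvec
  have hc : Real.cos (θ - 2 * Real.pi * k) = Real.cos θ := by
    have := (Real.cos_periodic.int_mul k).sub_eq θ
    simpa [mul_comm, mul_assoc, mul_left_comm] using this
  have hs : Real.sin (θ - 2 * Real.pi * k) = Real.sin θ := by
    have := (Real.sin_periodic.int_mul k).sub_eq θ
    simpa [mul_comm, mul_assoc, mul_left_comm] using this
  rw [hc, hs]

lemma uvec_add_pi (θ : ℝ) : uvec (θ + Real.pi) = -uvec θ := by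
  unfold uvec
  rw [Real.cos_add_pi, Real.sin_add_pi]
  funext j
  fin_cases j <;> simp

/-- the key trig identity for circular convexity -/
lemma uvec_combo {θ₁ θ θ₂ : ℝ} :
    Real.sin (θ₂ - θ₁) • uvec θ =
      Real.sin (θ₂ - θ) • uvec θ₁ + Real.sin (θ - θ₁) • uvec θ₂ := by
  funext j
  fin_cases j <;>
    · simp [uvec, Real.sin_sub, Real.cos_sub]
      ring





lemma isLinearMap_dotp (a : Fin 2 → ℝ) : IsLinearMap ℝ (dotp a) := by
  constructor
  · intro x y; simp [dotp]; ring
  · intro c x; simp [dotp]; ring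

lemma convex_halfplane (a : Fin 2 → ℝ) (c : ℝ) : Convex ℝ {x | dotp a x ≤ c} :=
  convex_halfSpace_le (isLinearMap_dotp a) c

lemma hull_le {S : Set (Fin 2 → ℝ)} {a : Fin 2 → ℝ} {c : ℝ}
    (h : ∀ x ∈ S, dotp a x ≤ c) :
    ∀ p ∈ convexHull ℝ S, dotp a p ≤ c :=
  fun _ hp => convexHull_min h (convex_halfplane a c) hp

/-- integer points in a bounded set are finite -/
lemma finite_int_preimage {B : Set (Fin 2 → ℝ)} (hB : Bornology.IsBounded B) :
    {z : Fin 2 → ℤ | toR z ∈ B}.Finite := by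
  obtain ⟨R, hR⟩ := hB.subset_closedBall 0
  have key : {z : Fin 2 → ℤ | toR z ∈ B} ⊆
      Set.pi Set.univ (fun _ : Fin 2 => Set.Icc (-⌈R⌉) ⌈R⌉) := by
    intro z hz
    intro i _
    have hmem := hR hz
    have hdist : ‖toR z‖ ≤ R := by
      simpa [Metric.mem_closedBall, dist_zero_right] using hmem
    have hco : |(z i : ℝ)| ≤ R := le_trans (norm_le_pi_norm (toR z) i) hdist
    have h1 : |(z i : ℝ)| ≤ (⌈R⌉ : ℝ) := le_trans hco (Int.le_ceil R)
    have h2 : |z i| ≤ ⌈R⌉ := by exact_mod_cast (by simpa [Int.cast_abs] using h1 : ((|z i| : ℤ) : ℝ) ≤ (⌈R⌉ : ℝ))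
    constructor
    · linarith [neg_abs_le (z i), abs_nonneg (z i)]
    · linarith [le_abs_self (z i)]
  exact Set.Finite.subset (Set.Finite.pi (fun _ => Set.finite_Icc _ _)) key

/-- mutual containment forces equality -/
lemma mutual_mem {S : Set (Fin 2 → ℝ)} (hS : S.Nonempty) {p q : Fin 2 → ℝ}
    (hp : p ∉ convexHull ℝ S) (h1 : q ∈ convexHull ℝ (insert p S))
    (h2 : p ∈ convexHull ℝ (insert q S)) : p = q := by
  rw [convexHull_insert hS, mem_convexJoin] at h1 h2
  obtain ⟨p', hp', x₁, hx₁, hq⟩ := h1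
  obtain ⟨q', hq', x₂, hx₂, hpseg⟩ := h2
  rw [Set.mem_singleton_iff] at hp' hq'
  rw [hp'] at hq
  rw [hq'] at hpseg
  obtain ⟨s, s', hs, hs', hss, hqe⟩ := hq
  obtain ⟨t, t', ht, ht', htt, hpe⟩ := hpseg
  have hqc : ∀ j, s * p j + s' * x₁ j = q j := fun j => by
    have := congrFun hqe j; simpa using this
  have hpc : ∀ j, t * q j + t' * x₂ j = p j := fun j => by
    have := congrFun hpe j; simpa using this
  have hts : t * s ≤ 1 := by nlinarith
  rcases eq_or_lt_of_le hts with heq | hlt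
  · -- t * s = 1 forces t = s = 1, s' = t' = 0, hence p = q
    have hs1 : s = 1 := by nlinarith
    have ht1 : t = 1 := by nlinarith
    have hs'0 : s' = 0 := by linarith
    have ht'0 : t' = 0 := by linarith
    funext j
    have h1 := hqc j
    have h2 := hpc j
    rw [hs1, hs'0] at h1
    linarith
  · -- t * s < 1: p is a convex combination of x₁ x₂ ∈ hull S
    exfalso
    set c := 1 - t * s with hc
    have hcpos : 0 < c := by simp [hc]; linarith
    have hab' : t * s' + t' = c := by linear_combination t * hss + htt
    have hab : t * s' / c + t' / c = 1 := by
      rw [← add_div, hab', div_self hcpos.ne']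
    have hpmem : p ∈ convexHull ℝ S := by
      have : (t * s' / c) • x₁ + (t' / c) • x₂ = p := by
        funext j
        have h1 := hqc j
        have h2 := hpc j
        simp only [Pi.add_apply, Pi.smul_apply, smul_eq_mul]
        field_simp
        linear_combination t * h1 + h2 - p j * hc
      rw [← this]
      exact (convex_convexHull ℝ S) hx₁ hx₂ (by positivity) (by positivity) hab
    exact hp hpmem



def IsObs (X : Set (Fin 2 → ℤ)) (o : Fin 2 → ℤ) : Prop :=
  o ∉ X ∧ ∀ w : Fin 2 → ℤ, toR w ∈ convexHull ℝ (toR '' insert o X) → w ∈ insert o X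

variable {X : Set (Fin 2 → ℤ)}

lemma T_finite (hfin : X.Finite) (z : Fin 2 → ℤ) :
    {w : Fin 2 → ℤ | w ∉ X ∧ toR w ∈ convexHull ℝ (toR '' insert z X)}.Finite := by
  have hc : IsCompact (convexHull ℝ (toR '' insert z X)) :=
    Set.Finite.isCompact_convexHull ℝ ((hfin.insert z).image toR)
  exact (finite_int_preimage hc.isBounded).subset (fun w hw => hw.2)

lemma exists_obs (hfin : X.Finite) (hXne : X.Nonempty)
    (hX : ∀ z : Fin 2 → ℤ, toR z ∈ convexHull ℝ (toR '' X) ↔ z ∈ X) :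
    ∀ z ∉ X, ∃ o, IsObs X o ∧ toR o ∈ convexHull ℝ (toR '' insert z X) := by
  have hSne : (toR '' X).Nonempty := hXne.image _
  suffices H : ∀ n : ℕ, ∀ z ∉ X, (T_finite hfin z).toFinset.card ≤ n →
      ∃ o, IsObs X o ∧ toR o ∈ convexHull ℝ (toR '' insert z X) by
    intro z hz; exact H _ z hz le_rfl
  intro n
  induction n with
  | zero =>
    intro z hz hcard
    exfalso
    have hzmem : z ∈ (T_finite hfin z).toFinset := by
      rw [Set.Finite.mem_toFinset]
      exact ⟨hz, subset_convexHull _ _ (Set.mem_image_of_mem _ (Set.mem_insert _ _))⟩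
    have := Finset.card_pos.mpr ⟨z, hzmem⟩
    omega
  | succ n ih =>
    intro z hz hcard
    by_cases hobs : IsObs X z
    · exact ⟨z, hobs, subset_convexHull _ _ (Set.mem_image_of_mem _ (Set.mem_insert _ _))⟩
    · unfold IsObs at hobs
      push_neg at hobs
      obtain ⟨w, hwmem, hwnot⟩ := hobs hz
      have hwX : w ∉ X := fun h => hwnot (Set.mem_insert_of_mem _ h)
      have hwz : w ≠ z := fun h => hwnot (h ▸ Set.mem_insert _ _)
      have hsub : convexHull ℝ (toR '' insert w X) ⊆ convexHull ℝ (toR '' insert z X) := by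
        apply convexHull_min _ (convex_convexHull ℝ _)
        rw [Set.image_insert_eq]
        intro x hx
        rcases hx with rfl | hx
        · exact hwmem
        · exact subset_convexHull _ _ (by rw [Set.image_insert_eq]; exact Set.mem_insert_of_mem _ hx)
      have hz_not : toR z ∉ convexHull ℝ (toR '' insert w X) := by
        intro hmem
        apply hwz
        apply toR_injective
        have h1 : toR w ∈ convexHull ℝ (insert (toR z) (toR '' X)) := by
          rwa [Set.image_insert_eq] at hwmem
        have h2 : toR z ∈ convexHull ℝ (insert (toR w) (toR '' X)) := by
          rwa [Set.image_insert_eq] at hmem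
        have hzK : toR z ∉ convexHull ℝ (toR '' X) := fun h => hz ((hX z).mp h)
        have hwK : toR w ∉ convexHull ℝ (toR '' X) := fun h => hwX ((hX w).mp h)
        exact (mutual_mem hSne hwK h2 h1)
      have hssub : (T_finite hfin w).toFinset ⊂ (T_finite hfin z).toFinset := by
        rw [Finset.ssubset_iff_of_subset]
        · refine ⟨z, ?_, ?_⟩
          · rw [Set.Finite.mem_toFinset]
            exact ⟨hz, subset_convexHull _ _ (Set.mem_image_of_mem _ (Set.mem_insert _ _))⟩
          · rw [Set.Finite.mem_toFinset]
            exact fun h => hz_not h.2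
        · intro u hu
          rw [Set.Finite.mem_toFinset] at hu ⊢
          exact ⟨hu.1, hsub hu.2⟩
      have hlt := Finset.card_lt_card hssub
      obtain ⟨o, ho, homem⟩ := ih w hwX (by omega)
      exact ⟨o, ho, hsub homem⟩

lemma relax_of_cut (hfin : X.Finite) (hXne : X.Nonempty)
    (hX : ∀ z : Fin 2 → ℤ, toR z ∈ convexHull ℝ (toR '' X) ↔ z ∈ X)
    {m : ℕ} (A : Fin m → Fin 2 → ℝ) (b : Fin m → ℝ)
    (hvalid : ∀ i, ∀ x ∈ X, dotp (A i) (toR x) ≤ b i)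
    (hcut : ∀ o, IsObs X o → ∃ i, b i < dotp (A i) (toR o)) :
    ∀ z : Fin 2 → ℤ, (∀ i, ∑ j, A i j * (z j : ℝ) ≤ b i) ↔ z ∈ X := by
  intro z
  have hd : ∀ i, (∑ j, A i j * (z j : ℝ)) = dotp (A i) (toR z) := by
    intro i; simp [Fin.sum_univ_two, dotp, toR]
  constructor
  · intro hineq
    by_contra hzX
    obtain ⟨o, ho, homem⟩ := exists_obs hfin hXne hX z hzX
    obtain ⟨i, hi⟩ := hcut o ho
    have : dotp (A i) (toR o) ≤ b i := by
      refine hull_le ?_ _ homem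
      intro x hx
      rw [Set.image_insert_eq] at hx
      rcases hx with rfl | hx
      · rw [← hd i]; exact hineq i
      · obtain ⟨y, hy, rfl⟩ := hx
        exact hvalid i y hy
    linarith
  · intro hzX i
    rw [hd i]
    exact hvalid i z hzX



lemma dotp_smul_left (c : ℝ) (a x : Fin 2 → ℝ) : dotp (c • a) x = c * dotp a x := by
  simp [dotp]; ring

lemma dotp_add_left (a b x : Fin 2 → ℝ) : dotp (a + b) x = dotp a x + dotp b x := by
  simp [dotp]; ring

lemma dotp_neg_left (a x : Fin 2 → ℝ) : dotp (-a) x = -dotp a x := by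
  simp [dotp]; ring

/-- a continuous linear functional is a dot product -/
lemma clm_eq_dotp (f : (Fin 2 → ℝ) →L[ℝ] ℝ) :
    ∃ a : Fin 2 → ℝ, (∀ x, f x = dotp a x) ∧
      (a ≠ 0 ∨ ∀ x, f x = 0) := by
  set e0 : Fin 2 → ℝ := Pi.single 0 1 with he0
  set e1 : Fin 2 → ℝ := Pi.single 1 1 with he1
  set a : Fin 2 → ℝ := ![f e0, f e1] with ha
  have hfa : ∀ x, f x = dotp a x := by
    intro x
    have hx : x = x 0 • e0 + x 1 • e1 := by
      funext j; fin_cases j <;> simp [he0, he1]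
    conv_lhs => rw [hx]
    rw [map_add, map_smul, map_smul]
    simp [dotp, ha]
    ring
  refine ⟨a, hfa, ?_⟩
  by_cases h : a = 0
  · right
    intro x
    rw [hfa x, h]
    simp [dotp]
  · left; exact h

/-- nonzero vector in polar coordinates -/
lemma exists_polar {a : Fin 2 → ℝ} (ha : a ≠ 0) :
    ∃ θ r : ℝ, 0 < r ∧ a = r • uvec θ := by
  set zc : ℂ := Complex.mk (a 0) (a 1) with hzc
  have hz0 : zc ≠ 0 := by
    intro h
    apply ha
    funext j
    have h1 : zc.re = 0 := by rw [h]; simp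
    have h2 : zc.im = 0 := by rw [h]; simp
    fin_cases j
    · exact h1
    · exact h2
  have habs : (0:ℝ) < ‖zc‖ := norm_pos_iff.mpr hz0
  refine ⟨zc.arg, ‖zc‖, habs, ?_⟩
  have hc := Complex.cos_arg hz0
  have hs := Complex.sin_arg zc
  have hre : zc.re = a 0 := rfl
  have him : zc.im = a 1 := rfl
  have h0 : a 0 = ‖zc‖ * Real.cos zc.arg := by
    rw [hc, hre]; field_simp
  have h1 : a 1 = ‖zc‖ * Real.sin zc.arg := by
    rw [hs, him]; field_simp
  funext j
  fin_cases j
  · simpa [uvec] using h0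
  · simpa [uvec] using h1

/-- Good F p θ: direction θ strictly separates p beyond all of F -/
def Good (F : Finset (Fin 2 → ℝ)) (p : Fin 2 → ℝ) (θ : ℝ) : Prop :=
  ∀ x ∈ F, dotp (uvec θ) x < dotp (uvec θ) p

lemma good_of_sep {F : Finset (Fin 2 → ℝ)} (hFne : F.Nonempty)
    {p : Fin 2 → ℝ} (hp : p ∉ convexHull ℝ (F : Set (Fin 2 → ℝ))) :
    ∃ θ, Good F p θ := by
  have hconv : Convex ℝ (convexHull ℝ (F : Set (Fin 2 → ℝ))) := convex_convexHull ℝ _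
  have hcl : IsClosed (convexHull ℝ (F : Set (Fin 2 → ℝ))) :=
    (F.finite_toSet.isCompact_convexHull ℝ).isClosed
  obtain ⟨f, u, hfu, hup⟩ := geometric_hahn_banach_closed_point hconv hcl hp
  obtain ⟨a, hfa, hcase⟩ := clm_eq_dotp f
  have hane : a ≠ 0 := by
    rcases hcase with h | h
    · exact h
    · exfalso
      obtain ⟨x₀, hx₀⟩ := hFne
      have h1 := hfu x₀ (subset_convexHull _ _ hx₀)
      rw [h x₀] at h1
      rw [h p] at hup
      linarith
  obtain ⟨θ, r, hr, rfl⟩ := exists_polar hane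
  refine ⟨θ, fun x hx => ?_⟩
  have h1 := hfu x (subset_convexHull _ _ hx)
  rw [hfa x, dotp_smul_left] at h1
  rw [hfa p, dotp_smul_left] at hup
  have := lt_trans h1 hup
  exact lt_of_mul_lt_mul_left (by linarith) hr.le

lemma good_pair_of_sep {F : Finset (Fin 2 → ℝ)} (hFne : F.Nonempty)
    {p q : Fin 2 → ℝ}
    (hdisj : ¬ (convexHull ℝ {p, q} ∩ convexHull ℝ (F : Set (Fin 2 → ℝ))).Nonempty) :
    ∃ θ, Good F p θ ∧ Good F q θ := by
  have hconv : Convex ℝ (convexHull ℝ (F : Set (Fin 2 → ℝ))) := convex_convexHull ℝ _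
  have hcomp : IsCompact (convexHull ℝ (F : Set (Fin 2 → ℝ))) :=
    F.finite_toSet.isCompact_convexHull ℝ
  have hconv2 : Convex ℝ (convexHull ℝ ({p, q} : Set (Fin 2 → ℝ))) := convex_convexHull ℝ _
  have hpqfin : ({p, q} : Set (Fin 2 → ℝ)).Finite :=
    (Set.finite_singleton q).insert p
  have hcl2 : IsClosed (convexHull ℝ ({p, q} : Set (Fin 2 → ℝ))) :=
    (hpqfin.isCompact_convexHull ℝ).isClosed
  have hdisj' : Disjoint (convexHull ℝ (F : Set (Fin 2 → ℝ))) (convexHull ℝ ({p, q} : Set (Fin 2 → ℝ))) := by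
    rw [Set.disjoint_iff_inter_eq_empty]
    rw [Set.not_nonempty_iff_eq_empty] at hdisj
    rw [Set.inter_comm]
    exact hdisj
  obtain ⟨f, u, v, hfu, huv, hvf⟩ :=
    geometric_hahn_banach_compact_closed hconv hcomp hconv2 hcl2 hdisj'
  obtain ⟨a, hfa, hcase⟩ := clm_eq_dotp f
  have hpmem : p ∈ convexHull ℝ ({p, q} : Set (Fin 2 → ℝ)) :=
    subset_convexHull _ _ (Set.mem_insert _ _)
  have hqmem : q ∈ convexHull ℝ ({p, q} : Set (Fin 2 → ℝ)) :=
    subset_convexHull _ _ (Set.mem_insert_of_mem _ rfl)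
  have hane : a ≠ 0 := by
    rcases hcase with h | h
    · exact h
    · exfalso
      obtain ⟨x₀, hx₀⟩ := hFne
      have h1 := hfu x₀ (subset_convexHull _ _ hx₀)
      have h2 := hvf p hpmem
      rw [h x₀] at h1
      rw [h p] at h2
      linarith
  obtain ⟨θ, r, hr, rfl⟩ := exists_polar hane
  have key : ∀ w, v < f w → Good F w θ := by
    intro w hw x hx
    have h1 := hfu x (subset_convexHull _ _ hx)
    rw [hfa x, dotp_smul_left] at h1
    rw [hfa w, dotp_smul_left] at hw
    have := lt_trans h1 (lt_trans huv hw)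
    exact lt_of_mul_lt_mul_left (by linarith) hr.le
  exact ⟨θ, key p (hvf p hpmem), key q (hvf q hqmem)⟩

lemma good_not_antipodal {F : Finset (Fin 2 → ℝ)} (hFne : F.Nonempty)
    {p : Fin 2 → ℝ} {θ : ℝ} (h1 : Good F p θ) (h2 : Good F p (θ + Real.pi)) : False := by
  obtain ⟨x₀, hx₀⟩ := hFne
  have a1 := h1 x₀ hx₀
  have a2 := h2 x₀ hx₀
  rw [uvec_add_pi, dotp_neg_left, dotp_neg_left] at a2
  linarith

lemma good_convex {F : Finset (Fin 2 → ℝ)} {p : Fin 2 → ℝ} {θ₁ θ θ₂ : ℝ}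
    (hlt1 : θ₁ < θ) (hlt2 : θ < θ₂) (hpi : θ₂ - θ₁ < Real.pi)
    (h1 : Good F p θ₁) (h2 : Good F p θ₂) : Good F p θ := by
  intro x hx
  have s1 : 0 < Real.sin (θ₂ - θ₁) :=
    Real.sin_pos_of_pos_of_lt_pi (by linarith) hpi
  have s2 : 0 < Real.sin (θ₂ - θ) :=
    Real.sin_pos_of_pos_of_lt_pi (by linarith) (by linarith)
  have s3 : 0 < Real.sin (θ - θ₁) :=
    Real.sin_pos_of_pos_of_lt_pi (by linarith) (by linarith)
  have key : ∀ w, Real.sin (θ₂ - θ₁) * dotp (uvec θ) w =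
      Real.sin (θ₂ - θ) * dotp (uvec θ₁) w + Real.sin (θ - θ₁) * dotp (uvec θ₂) w := by
    intro w
    rw [← dotp_smul_left, ← dotp_smul_left, ← dotp_smul_left, uvec_combo (θ₁ := θ₁) (θ := θ) (θ₂ := θ₂), dotp_add_left]
  have hx1 := h1 x hx
  have hx2 := h2 x hx
  have hfinal : Real.sin (θ₂ - θ₁) * dotp (uvec θ) x < Real.sin (θ₂ - θ₁) * dotp (uvec θ) p := by
    rw [key x, key p]
    nlinarith
  exact lt_of_mul_lt_mul_left hfinal s1.le


lemma good_periodic {F : Finset (Fin 2 → ℝ)} {p : Fin 2 → ℝ} (θ : ℝ) (k : ℤ) :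
    Good F p (θ - 2 * Real.pi * k) ↔ Good F p θ := by
  unfold Good
  rw [uvec_periodic θ k]

lemma good_congr {F : Finset (Fin 2 → ℝ)} {p : Fin 2 → ℝ} {θ θ' : ℝ}
    (h : uvec θ' = uvec θ) : Good F p θ' ↔ Good F p θ := by
  unfold Good; rw [h]

lemma window_shift {F : Finset (Fin 2 → ℝ)} {p : Fin 2 → ℝ} {θ₀ : ℝ}
    (h₀ : ¬ Good F p θ₀) {θ : ℝ} (hθ : Good F p θ) :
    ∃ θ' ∈ Set.Ioo θ₀ (θ₀ + 2 * Real.pi), uvec θ' = uvec θ := by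
  have hπ : (0:ℝ) < 2 * Real.pi := by positivity
  set k : ℤ := ⌊(θ - θ₀) / (2 * Real.pi)⌋ with hk
  set θ' := θ - 2 * Real.pi * k with hθ'
  have huv : uvec θ' = uvec θ := uvec_periodic θ k
  have hg : Good F p θ' := (good_congr huv).mpr hθ
  have hfl := Int.floor_le ((θ - θ₀) / (2 * Real.pi))
  have hfl2 := Int.lt_floor_add_one ((θ - θ₀) / (2 * Real.pi))
  have hb1 : θ₀ ≤ θ' := by
    rw [hθ']
    have : (k : ℝ) * (2 * Real.pi) ≤ θ - θ₀ := by
      rw [← le_div_iff₀ hπ]; exact hfl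
    linarith
  have hb2 : θ' < θ₀ + 2 * Real.pi := by
    rw [hθ']
    have : θ - θ₀ < ((k : ℝ) + 1) * (2 * Real.pi) := by
      rw [← div_lt_iff₀ hπ]; exact hfl2
    nlinarith
  rcases eq_or_lt_of_le hb1 with heq | hlt
  · exact absurd (heq ▸ hg) h₀
  · exact ⟨θ', ⟨hlt, hb2⟩, huv⟩

lemma window_convex {F : Finset (Fin 2 → ℝ)} (hFne : F.Nonempty) {p : Fin 2 → ℝ} {θ₀ : ℝ}
    (h₀ : ¬ Good F p θ₀) {θ₁ θ θ₂ : ℝ}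
    (hw1 : θ₁ ∈ Set.Ioo θ₀ (θ₀ + 2 * Real.pi)) (hw2 : θ₂ ∈ Set.Ioo θ₀ (θ₀ + 2 * Real.pi))
    (hlt1 : θ₁ < θ) (hlt2 : θ < θ₂)
    (h1 : Good F p θ₁) (h2 : Good F p θ₂) : Good F p θ := by
  rcases lt_trichotomy (θ₂ - θ₁) Real.pi with hcase | hcase | hcase
  · exact good_convex hlt1 hlt2 hcase h1 h2
  · exfalso
    have : θ₂ = θ₁ + Real.pi := by linarith
    exact good_not_antipodal hFne h1 (this ▸ h2)
  · exfalso
    have hg1' : Good F p (θ₁ + 2 * Real.pi) := by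
      apply (good_periodic (F := F) (p := p) (θ₁ + 2 * Real.pi) 1).mp
      rw [show θ₁ + 2 * Real.pi - 2 * Real.pi * ((1:ℤ):ℝ) = θ₁ by push_cast; ring]
      exact h1
    have hgap : θ₁ + 2 * Real.pi - θ₂ ≤ Real.pi := by
      have := hw1.1; have := hw2.2; linarith
    rcases eq_or_lt_of_le hgap with heq | hlt
    · have : θ₁ + 2 * Real.pi = θ₂ + Real.pi := by linarith
      exact good_not_antipodal hFne h2 (this ▸ hg1')
    · have hmem : Good F p (θ₀ + 2 * Real.pi) := by
        apply good_convex (θ₁ := θ₂) (θ₂ := θ₁ + 2 * Real.pi) _ _ _ h2 hg1'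
        · exact hw2.2
        · have := hw1.1; linarith
        · linarith
      have : Good F p θ₀ := by
        have h' := (good_periodic (F := F) (p := p) (θ₀ + 2 * Real.pi) 1).mpr hmem
        rwa [show θ₀ + 2 * Real.pi - 2 * Real.pi * ((1:ℤ):ℝ) = θ₀ by push_cast; ring] at h'
      exact h₀ this

lemma isOpen_good (F : Finset (Fin 2 → ℝ)) (p : Fin 2 → ℝ) :
    IsOpen {θ : ℝ | Good F p θ} := by
  have : {θ : ℝ | Good F p θ} = ⋂ x ∈ F, {θ : ℝ | dotp (uvec θ) x < dotp (uvec θ) p} := by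
    ext θ; simp [Good]
  rw [this]
  apply isOpen_biInter_finset
  intro x _
  have hc : ∀ w : Fin 2 → ℝ, Continuous (fun θ => dotp (uvec θ) w) := by
    intro w
    have : (fun θ => dotp (uvec θ) w) = fun θ => Real.cos θ * w 0 + Real.sin θ * w 1 := by
      funext θ; simp [dotp, uvec]
    rw [this]
    exact ((Real.continuous_cos.mul continuous_const).add (Real.continuous_sin.mul continuous_const))
  exact isOpen_lt (hc x) (hc p)

/-- the set of good angles in the window is an open interval -/
lemma window_is_Ioo {F : Finset (Fin 2 → ℝ)} (hFne : F.Nonempty) {p : Fin 2 → ℝ} {θ₀ : ℝ}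
    (h₀ : ¬ Good F p θ₀)
    (hne : ∃ θ ∈ Set.Ioo θ₀ (θ₀ + 2 * Real.pi), Good F p θ) :
    ∃ a b : ℝ, a < b ∧
      {θ | θ ∈ Set.Ioo θ₀ (θ₀ + 2 * Real.pi) ∧ Good F p θ} = Set.Ioo a b := by
  set S := {θ | θ ∈ Set.Ioo θ₀ (θ₀ + 2 * Real.pi) ∧ Good F p θ} with hS
  have hSne : S.Nonempty := by
    obtain ⟨θ, h1, h2⟩ := hne; exact ⟨θ, h1, h2⟩
  have hSopen : IsOpen S := by
    have : S = Set.Ioo θ₀ (θ₀ + 2 * Real.pi) ∩ {θ | Good F p θ} := by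
      ext θ; simp [hS, Set.mem_setOf_eq]
    rw [this]
    exact isOpen_Ioo.inter (isOpen_good F p)
  have hbdd_below : BddBelow S := ⟨θ₀, fun θ hθ => (hθ.1.1).le⟩
  have hbdd_above : BddAbove S := ⟨θ₀ + 2 * Real.pi, fun θ hθ => (hθ.1.2).le⟩
  refine ⟨sInf S, sSup S, ?_, ?_⟩
  · obtain ⟨θ, hθ⟩ := hSne
    obtain ⟨ε, hε, hball⟩ := Metric.isOpen_iff.mp hSopen θ hθ
    have h1 : θ - ε/2 ∈ S := hball (by simp [Real.dist_eq, abs_of_pos, hε]; try linarith)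
    have h2 : θ + ε/2 ∈ S := hball (by simp [Real.dist_eq, abs_of_pos, hε]; try linarith)
    have := csInf_le hbdd_below h1
    have := le_csSup hbdd_above h2
    linarith
  · ext θ
    constructor
    · intro hθ
      constructor
      · rcases eq_or_lt_of_le (csInf_le hbdd_below hθ) with heq | hlt
        · exfalso
          obtain ⟨ε, hε, hball⟩ := Metric.isOpen_iff.mp hSopen θ hθ
          have h1 : θ - ε/2 ∈ S := hball (by simp [Real.dist_eq, abs_of_pos, hε]; try linarith)
          have := csInf_le hbdd_below h1
          rw [← heq] at this
          linarith
        · exact hlt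
      · rcases eq_or_lt_of_le (le_csSup hbdd_above hθ) with heq | hlt
        · exfalso
          obtain ⟨ε, hε, hball⟩ := Metric.isOpen_iff.mp hSopen θ hθ
          have h2 : θ + ε/2 ∈ S := hball (by simp [Real.dist_eq, abs_of_pos, hε]; try linarith)
          have := le_csSup hbdd_above h2
          rw [heq] at this
          linarith
        · exact hlt
    · rintro ⟨hlo, hhi⟩
      obtain ⟨θ₁, hθ₁S, hθ₁lt⟩ := exists_lt_of_csInf_lt hSne hlo
      obtain ⟨θ₂, hθ₂S, hθ₂gt⟩ := exists_lt_of_lt_csSup hSne hhi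
      refine ⟨⟨lt_trans hθ₁S.1.1 hθ₁lt, lt_trans hθ₂gt hθ₂S.1.2⟩, ?_⟩
      exact window_convex hFne h₀ hθ₁S.1 hθ₂S.1 hθ₁lt hθ₂gt hθ₁S.2 hθ₂S.2

/-- Gallai-type piercing for finite families of open intervals -/
lemma gallai {ι : Type*} [DecidableEq ι] (a b : ι → ℝ) :
    ∀ n : ℕ, ∀ t : Finset ι, t.card ≤ n → (∀ i ∈ t, a i < b i) →
    ∃ (P : Finset ℝ) (D : Finset ι), D ⊆ t ∧
      (∀ i ∈ t, ∃ p ∈ P, p ∈ Set.Ioo (a i) (b i)) ∧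
      (∀ i ∈ D, ∀ j ∈ D, i ≠ j → Set.Ioo (a i) (b i) ∩ Set.Ioo (a j) (b j) = ∅) ∧
      P.card ≤ D.card := by
  intro n
  induction n with
  | zero =>
    intro t hcard _
    have : t = ∅ := Finset.card_eq_zero.mp (Nat.le_zero.mp hcard)
    subst this
    exact ⟨∅, ∅, Finset.Subset.refl _, by simp, by simp, le_rfl⟩
  | succ n ih =>
    intro t hcard hab
    rcases Finset.eq_empty_or_nonempty t with rfl | htne
    · exact ⟨∅, ∅, Finset.Subset.refl _, by simp, by simp, le_rfl⟩
    obtain ⟨i₀, hi₀, hmin⟩ := Finset.exists_min_image t b htne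
    set G := t.filter (fun j => a j < b i₀) with hG
    have hi₀G : i₀ ∈ G := Finset.mem_filter.mpr ⟨hi₀, hab i₀ hi₀⟩
    have hGne : G.Nonempty := ⟨i₀, hi₀G⟩
    set m := G.sup' hGne a with hm
    have hmlt : m < b i₀ := by
      rw [hm, Finset.sup'_lt_iff]
      intro j hj
      exact (Finset.mem_filter.mp hj).2
    set pt := (m + b i₀) / 2 with hpt
    have hpt1 : m < pt := by rw [hpt]; linarith
    have hpt2 : pt < b i₀ := by rw [hpt]; linarith
    set R := t \ G with hR
    have hi₀R : i₀ ∉ R := by rw [hR]; simp [hi₀G]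
    have hRcard : R.card ≤ n := by
      have h1 : R ⊆ t := Finset.sdiff_subset
      have h2 : R.card < t.card := Finset.card_lt_card (Finset.ssubset_iff_of_subset h1 |>.mpr ⟨i₀, hi₀, hi₀R⟩)
      omega
    obtain ⟨P', D', hD'sub, hP'cov, hD'disj, hP'card⟩ := ih R hRcard (fun i hi => hab i (Finset.mem_sdiff.mp hi).1)
    refine ⟨insert pt P', insert i₀ D', ?_, ?_, ?_, ?_⟩
    · intro j hj
      rcases Finset.mem_insert.mp hj with rfl | hj
      · exact hi₀
      · exact Finset.sdiff_subset (hD'sub hj)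
    · intro i hi
      by_cases hiG : i ∈ G
      · refine ⟨pt, Finset.mem_insert_self _ _, ?_, ?_⟩
        · calc a i ≤ m := Finset.le_sup' a hiG
            _ < pt := hpt1
        · calc pt < b i₀ := hpt2
            _ ≤ b i := hmin i (Finset.mem_filter.mp hiG).1
      · obtain ⟨p, hp, hpmem⟩ := hP'cov i (Finset.mem_sdiff.mpr ⟨hi, hiG⟩)
        exact ⟨p, Finset.mem_insert_of_mem hp, hpmem⟩
    · -- pairwise disjoint on insert i₀ D'
      have hdisj_i₀ : ∀ j ∈ D', Set.Ioo (a i₀) (b i₀) ∩ Set.Ioo (a j) (b j) = ∅ := by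
        intro j hj
        have hjR : j ∈ R := hD'sub hj
        have hjnG : j ∉ G := (Finset.mem_sdiff.mp hjR).2
        have hjt : j ∈ t := (Finset.mem_sdiff.mp hjR).1
        have haj : ¬ a j < b i₀ := by
          intro hcon
          exact hjnG (Finset.mem_filter.mpr ⟨hjt, hcon⟩)
        push_neg at haj
        ext x
        simp only [Set.mem_inter_iff, Set.mem_Ioo, Set.mem_empty_iff_false, iff_false]
        rintro ⟨⟨_, hx2⟩, ⟨hx3, _⟩⟩
        linarith
      intro i hi j hj hij
      rcases Finset.mem_insert.mp hi with rfl | hi' <;>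
        rcases Finset.mem_insert.mp hj with rfl | hj'
      · exact absurd rfl hij
      · exact hdisj_i₀ j hj'
      · rw [Set.inter_comm]; exact hdisj_i₀ i hi'
      · exact hD'disj i hi' j hj' hij
    · have hi₀D' : i₀ ∉ D' := fun h => hi₀R (hD'sub h)
      rw [Finset.card_insert_of_notMem hi₀D']
      calc (insert pt P').card ≤ P'.card + 1 := Finset.card_insert_le _ _
        _ ≤ D'.card + 1 := by omega


lemma sum_eq_dotp (A : Fin 2 → ℝ) (z : Fin 2 → ℤ) :
    (∑ j, A j * (z j : ℝ)) = dotp A (toR z) := by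
  simp [Fin.sum_univ_two, dotp, toR]

lemma relax_from_angles {X : Set (Fin 2 → ℤ)} (hfin : X.Finite) (hXne : X.Nonempty)
    (hX : ∀ z : Fin 2 → ℤ, toR z ∈ convexHull ℝ (toR '' X) ↔ z ∈ X)
    {F : Finset (Fin 2 → ℝ)} (hFs : (F : Set (Fin 2 → ℝ)) = toR '' X) (hFne : F.Nonempty)
    {m : ℕ} (Θ : Fin m → ℝ)
    (hcut : ∀ o, IsObs X o → ∃ i, Good F (toR o) (Θ i)) :
    ∀ z : Fin 2 → ℤ,
      (∀ i, ∑ j, uvec (Θ i) j * (z j : ℝ) ≤ F.sup' hFne (dotp (uvec (Θ i)))) ↔ z ∈ X := by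
  apply relax_of_cut hfin hXne hX
  · intro i x hx
    apply Finset.le_sup'
    rw [← Finset.mem_coe, hFs]
    exact Set.mem_image_of_mem _ hx
  · intro o ho
    obtain ⟨i, hi⟩ := hcut o ho
    refine ⟨i, ?_⟩
    rw [Finset.sup'_lt_iff]
    intro x hx
    exact hi x hx

lemma convex_halfplane_gt (a : Fin 2 → ℝ) (c : ℝ) : Convex ℝ {x | c < dotp a x} :=
  convex_halfSpace_gt (isLinearMap_dotp a) c

lemma hiding_le {X : Set (Fin 2 → ℤ)} {S : Finset (Fin 2 → ℤ)}
    (hS : HidingSet X ↑S)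
    {m : ℕ} {A : Fin m → Fin 2 → ℝ} {b : Fin m → ℝ} (hrel : Relax X A b) :
    S.card ≤ m := by
  classical
  rcases Finset.eq_empty_or_nonempty S with rfl | hSne
  · simp
  have hviol : ∀ z ∈ S, ∃ i, b i < dotp (A i) (toR z) := by
    intro z hz
    have hzX : z ∉ X := (hS.1 z (Finset.mem_coe.mpr hz)).1
    have h2 : ¬ ∀ i, ∑ j, A i j * (z j : ℝ) ≤ b i := fun hc => hzX ((hrel z).mp hc)
    push_neg at h2
    obtain ⟨i, hi⟩ := h2
    exact ⟨i, by rwa [sum_eq_dotp] at hi⟩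
  obtain ⟨z₀, hz₀⟩ := hSne
  have hne : Nonempty (Fin m) := ⟨(hviol z₀ hz₀).choose⟩
  set g : (Fin 2 → ℤ) → Fin m := fun z => if h : z ∈ S then (hviol z h).choose else hne.some with hg
  have hgspec : ∀ z ∈ S, b (g z) < dotp (A (g z)) (toR z) := by
    intro z hz
    simp only [hg, dif_pos hz]
    exact (hviol z hz).choose_spec
  have hbound : ∀ i, ∀ p ∈ convexHull ℝ (toR '' X), dotp (A i) p ≤ b i := by
    intro i
    apply hull_le
    rintro x ⟨w, hw, rfl⟩
    have := ((hrel w).mpr hw) i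
    rwa [sum_eq_dotp] at this
  have hinj : Set.InjOn g ↑S := by
    intro x hx y hy hgxy
    by_contra hxy
    obtain ⟨p, hp1, hp2⟩ := hS.2 x hx y hy hxy
    have hby : b (g x) < dotp (A (g x)) p := by
      have hsub : convexHull ℝ {toR x, toR y} ⊆ {q | b (g x) < dotp (A (g x)) q} := by
        apply convexHull_min _ (convex_halfplane_gt (A (g x)) (b (g x)))
        rintro q (rfl | rfl)
        · exact hgspec x (Finset.mem_coe.mp hx)
        · rw [hgxy]
          exact hgspec y (Finset.mem_coe.mp hy)
      exact hsub hp1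
    have := hbound (g x) p hp2
    linarith
  have := Finset.card_le_card_of_injOn g (fun a _ => Finset.mem_univ (g a)) hinj
  simpa using this

end RCAux

theorem rc_plane_hiding_bound (X : Set (Fin 2 → ℤ)) (hfin : X.Finite)
    (hX : ∀ z : Fin 2 → ℤ, toR z ∈ convexHull ℝ (toR '' X) ↔ z ∈ X)
    (hdim : affineSpan ℝ (toR '' X) = ⊤)
    (hobs : {z : Fin 2 → ℤ | z ∉ X ∧ ∀ w : Fin 2 → ℤ,
      toR w ∈ convexHull ℝ (toR '' insert z X) → w ∈ insert z X}.Finite) :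
    ∃ h r : ℕ,
      (∃ H : Finset (Fin 2 → ℤ), HidingSet X ↑H ∧ H.card = h) ∧
      (∀ n : ℕ, (∃ H : Finset (Fin 2 → ℤ), HidingSet X ↑H ∧ H.card = n) → n ≤ h) ∧
      (∃ A : Fin r → Fin 2 → ℝ, ∃ b : Fin r → ℝ, Relax X A b) ∧
      (∀ m : ℕ, (∃ A : Fin m → Fin 2 → ℝ, ∃ b : Fin m → ℝ, Relax X A b) → r ≤ m) ∧
      h ≤ r ∧ r ≤ h + 1 := by
  classical
  have hXne : X.Nonempty := by
    have h1 : ((affineSpan ℝ (toR '' X) : AffineSubspace ℝ (Fin 2 → ℝ)) : Set (Fin 2 → ℝ)).Nonempty := by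
      rw [hdim]; exact ⟨0, trivial⟩
    rw [affineSpan_nonempty] at h1
    exact h1.of_image
  set F : Finset (Fin 2 → ℝ) := (hfin.image toR).toFinset with hF
  have hFs : (F : Set (Fin 2 → ℝ)) = toR '' X := (hfin.image toR).coe_toFinset
  have hFne : F.Nonempty := by
    rw [hF, Set.Finite.toFinset_nonempty]
    exact hXne.image _
  set ObsF : Finset (Fin 2 → ℤ) := hobs.toFinset with hObsF
  have hOmem : ∀ o, o ∈ ObsF ↔ RCAux.IsObs X o := fun o => hobs.mem_toFinset
  have hsep : ∀ o, RCAux.IsObs X o → ∃ θ, RCAux.Good F (toR o) θ := by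
    intro o ho
    apply RCAux.good_of_sep hFne
    rw [hFs]
    exact fun h => ho.1 ((hX o).mp h)
  have hobsall : ∀ o ∈ ObsF, ∃ θ, RCAux.Good F (toR o) θ :=
    fun o ho => hsep o ((hOmem o).mp ho)
  choose! θall hθall using hobsall
  set m₀ := ObsF.card with hm₀
  have hrel₀ : Relax X
      (fun i => RCAux.uvec (θall ((ObsF.equivFin.symm i : {x // x ∈ ObsF}) : Fin 2 → ℤ)))
      (fun i : Fin m₀ => F.sup' hFne (RCAux.dotp (RCAux.uvec (θall ((ObsF.equivFin.symm i : {x // x ∈ ObsF}) : Fin 2 → ℤ))))) := by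
    apply RCAux.relax_from_angles hfin hXne hX hFs hFne
      (fun i : Fin m₀ => θall ((ObsF.equivFin.symm i : {x // x ∈ ObsF}) : Fin 2 → ℤ))
    intro o ho
    have hoF : o ∈ ObsF := (hOmem o).mpr ho
    refine ⟨ObsF.equivFin ⟨o, hoF⟩, ?_⟩
    rw [Equiv.symm_apply_apply]
    exact hθall o hoF
  have hP0 : ∃ H : Finset (Fin 2 → ℤ), HidingSet X ↑H ∧ H.card = 0 := by
    refine ⟨∅, ⟨?_, ?_⟩, rfl⟩ <;> simp
  have hPbound : ∀ n, (∃ H : Finset (Fin 2 → ℤ), HidingSet X ↑H ∧ H.card = n) → n ≤ m₀ := by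
    rintro n ⟨H, hH, rfl⟩
    exact RCAux.hiding_le hH hrel₀
  set Pprop : ℕ → Prop := fun n => ∃ H : Finset (Fin 2 → ℤ), HidingSet X ↑H ∧ H.card = n with hPprop
  set h := Nat.findGreatest Pprop m₀ with hh
  have hPh : Pprop h := Nat.findGreatest_spec (Nat.zero_le m₀) hP0
  have hPmax : ∀ n, Pprop n → n ≤ h := fun n hn => Nat.le_findGreatest (hPbound n hn) hn
  have hQne : ∃ mm : ℕ, ∃ A : Fin mm → Fin 2 → ℝ, ∃ b : Fin mm → ℝ, Relax X A b :=
    ⟨m₀, _, _, hrel₀⟩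
  set r := Nat.find hQne with hr
  have hQr : ∃ A : Fin r → Fin 2 → ℝ, ∃ b : Fin r → ℝ, Relax X A b := Nat.find_spec hQne
  have hQmin : ∀ mm, (∃ A : Fin mm → Fin 2 → ℝ, ∃ b : Fin mm → ℝ, Relax X A b) → r ≤ mm :=
    fun mm hmm => Nat.find_min' hQne hmm
  have hhr : h ≤ r := by
    obtain ⟨H, hH, hcard⟩ := hPh
    obtain ⟨A, b, hrel⟩ := hQr
    rw [← hcard]
    exact RCAux.hiding_le hH hrel
  have hrh : r ≤ h + 1 := by
    rcases Finset.eq_empty_or_nonempty ObsF with hObs_empty | hObs_ne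
    · have hQ1 : ∃ A : Fin 1 → Fin 2 → ℝ, ∃ b : Fin 1 → ℝ, Relax X A b := by
        refine ⟨_, _, RCAux.relax_from_angles hfin hXne hX hFs hFne (fun _ : Fin 1 => (0:ℝ)) ?_⟩
        intro o ho
        have : o ∈ ObsF := (hOmem o).mpr ho
        rw [hObs_empty] at this
        exact absurd this (Finset.notMem_empty o)
      exact le_trans (hQmin 1 hQ1) (by omega)
    · obtain ⟨o₀, ho₀⟩ := hObs_ne
      obtain ⟨θ₀, hθ₀⟩ := hsep o₀ ((hOmem o₀).mp ho₀)
      set O' := ObsF.filter (fun o => ¬ RCAux.Good F (toR o) θ₀) with hO'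
      have hwin : ∀ o ∈ O', ∃ a b : ℝ, a < b ∧
          {θ | θ ∈ Set.Ioo θ₀ (θ₀ + 2*Real.pi) ∧ RCAux.Good F (toR o) θ} = Set.Ioo a b := by
        intro o ho
        have hnot : ¬ RCAux.Good F (toR o) θ₀ := (Finset.mem_filter.mp ho).2
        obtain ⟨θ, hθ⟩ := hsep o ((hOmem o).mp (Finset.mem_filter.mp ho).1)
        obtain ⟨θ', hθ'w, hθ'e⟩ := RCAux.window_shift hnot hθ
        exact RCAux.window_is_Ioo hFne hnot ⟨θ', hθ'w, (RCAux.good_congr hθ'e).mpr hθ⟩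
      choose! af bf hab hIoo using hwin
      obtain ⟨Pts, D, hDsub, hcov, hdisj, hPD⟩ := RCAux.gallai af bf O'.card O' le_rfl hab
      have hDhide : HidingSet X ↑D := by
        constructor
        · intro z hz
          have hzO : z ∈ O' := hDsub (Finset.mem_coe.mp hz)
          have hzObs : RCAux.IsObs X z := (hOmem z).mp (Finset.mem_filter.mp hzO).1
          refine ⟨hzObs.1, ?_⟩
          rw [hdim]
          trivial
        · intro x hx y hy hxy
          by_contra hcon
          have hdis : ¬ (convexHull ℝ {toR x, toR y} ∩ convexHull ℝ (F : Set (Fin 2 → ℝ))).Nonempty := by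
            rw [hFs]; exact hcon
          obtain ⟨θ, hgx, hgy⟩ := RCAux.good_pair_of_sep hFne hdis
          have hxO : x ∈ O' := hDsub (Finset.mem_coe.mp hx)
          have hyO : y ∈ O' := hDsub (Finset.mem_coe.mp hy)
          have hnx : ¬ RCAux.Good F (toR x) θ₀ := (Finset.mem_filter.mp hxO).2
          obtain ⟨θ', hθ'w, hθ'e⟩ := RCAux.window_shift hnx hgx
          have hgx' : RCAux.Good F (toR x) θ' := (RCAux.good_congr hθ'e).mpr hgx
          have hgy' : RCAux.Good F (toR y) θ' := (RCAux.good_congr hθ'e).mpr hgy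
          have hmx : θ' ∈ Set.Ioo (af x) (bf x) := by
            rw [← hIoo x hxO]; exact ⟨hθ'w, hgx'⟩
          have hmy : θ' ∈ Set.Ioo (af y) (bf y) := by
            rw [← hIoo y hyO]; exact ⟨hθ'w, hgy'⟩
          have hE := hdisj x (Finset.mem_coe.mp hx) y (Finset.mem_coe.mp hy) hxy
          rw [Set.eq_empty_iff_forall_notMem] at hE
          exact hE θ' ⟨hmx, hmy⟩
      have hDh : D.card ≤ h := hPmax D.card ⟨D, hDhide, rfl⟩
      set t := Pts.card with ht
      set Θ : Fin (t+1) → ℝ :=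
        Fin.snoc (fun i => ((Pts.equivFin.symm i : {x // x ∈ Pts}) : ℝ)) θ₀ with hΘ
      have hcutΘ : ∀ o, RCAux.IsObs X o → ∃ i, RCAux.Good F (toR o) (Θ i) := by
        intro o ho
        have hoF : o ∈ ObsF := (hOmem o).mpr ho
        by_cases hg : RCAux.Good F (toR o) θ₀
        · refine ⟨Fin.last t, ?_⟩
          rw [hΘ, Fin.snoc_last]
          exact hg
        · have hoO' : o ∈ O' := Finset.mem_filter.mpr ⟨hoF, hg⟩
          obtain ⟨p, hpP, hpIoo⟩ := hcov o hoO'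
          refine ⟨Fin.castSucc (Pts.equivFin ⟨p, hpP⟩), ?_⟩
          rw [hΘ, Fin.snoc_castSucc, Equiv.symm_apply_apply]
          have : p ∈ {θ | θ ∈ Set.Ioo θ₀ (θ₀ + 2*Real.pi) ∧ RCAux.Good F (toR o) θ} := by
            rw [hIoo o hoO']; exact hpIoo
          exact this.2
      have hQt : ∃ A : Fin (t+1) → Fin 2 → ℝ, ∃ b : Fin (t+1) → ℝ, Relax X A b :=
        ⟨_, _, RCAux.relax_from_angles hfin hXne hX hFs hFne Θ hcutΘ⟩
      calc r ≤ t + 1 := hQmin (t+1) hQt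
        _ ≤ D.card + 1 := by omega
        _ ≤ h + 1 := by omega
  exact ⟨h, r, hPh, hPmax, hQr, hQmin, hhr, hrh⟩
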